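/- arXiv:1111.6984 — 2 statements merged into one kernel-verified Lean document; each statement's English description precedes it below -/
import Mathlib

section
/- The map J(z₁,z₂) = (z₂,z₁) reverses every diagonal matrix Λ = diag(μ, μ⁻¹), i.e. J⁻¹ΛJ = Λ⁻¹; more generally a formal map Θ of ℂ² reverses every element of the group D = {diag(μ,μ⁻¹) : μ ∈ ℂ*} if and only if Θ(z₁,z₂) = (z₂φ(z₁z₂), z₁ψ(z₁z₂)) for one-variable formal series φ, ψ with nonzero constant terms. -/
noncomputable section

def compP (f g : PowerSeries ℂ) : PowerSeries ℂ :=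
  PowerSeries.mk fun n =>
    ∑ j ∈ Finset.range (n + 1), PowerSeries.coeff j f * PowerSeries.coeff n (g ^ j)

def iterP (g : PowerSeries ℂ) : ℕ → PowerSeries ℂ
  | 0 => PowerSeries.X
  | m + 1 => compP g (iterP g m)

abbrev FormalMap (n : ℕ) := Fin n → MvPowerSeries (Fin n) ℂ

def degreeOf {n : ℕ} (d : Fin n →₀ ℕ) : ℕ := d.sum fun _ m => m

def substM {n : ℕ} (G : FormalMap n) (f : MvPowerSeries (Fin n) ℂ) :
    MvPowerSeries (Fin n) ℂ :=
  fun d =>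
    ∑ e ∈ Finset.Iic (Finsupp.equivFunOnFinite.symm fun _ => degreeOf d),
      MvPowerSeries.coeff e f * MvPowerSeries.coeff d (∏ i, G i ^ e i)

def compM {n : ℕ} (F G : FormalMap n) : FormalMap n := fun i => substM G (F i)

def idM (n : ℕ) : FormalMap n := fun i => MvPowerSeries.X i

def iterM {n : ℕ} (F : FormalMap n) : ℕ → FormalMap n
  | 0 => idM n
  | m + 1 => compM F (iterM F m)

def linMatrix {n : ℕ} (F : FormalMap n) : Matrix (Fin n) (Fin n) ℂ :=
  fun i j => MvPowerSeries.coeff (Finsupp.single j 1) (F i)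

def linMap {n : ℕ} (F : FormalMap n) : FormalMap n :=
  fun i => ∑ j, MvPowerSeries.C (linMatrix F i j) * MvPowerSeries.X j

def substPM (q : MvPowerSeries (Fin 2) ℂ) (φ : PowerSeries ℂ) : MvPowerSeries (Fin 2) ℂ :=
  fun d =>
    ∑ j ∈ Finset.range (degreeOf d + 1),
      PowerSeries.coeff j φ * MvPowerSeries.coeff d (q ^ j)

def pXY : MvPowerSeries (Fin 2) ℂ := MvPowerSeries.X 0 * MvPowerSeries.X 1

def Mmap (φ ψ : PowerSeries ℂ) : FormalMap 2 :=
  ![MvPowerSeries.X 0 * substPM pXY φ, MvPowerSeries.X 1 * substPM pXY ψ]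

/-- The diagonal map Λ_μ = diag(μ, μ⁻¹) as a formal map of ℂ². -/
def Dmap (μ : ℂ) : FormalMap 2 :=
  ![MvPowerSeries.C μ * MvPowerSeries.X 0,
    MvPowerSeries.C μ⁻¹ * MvPowerSeries.X 1]

section Helpers

open MvPowerSeries Finsupp




lemma degreeOf_eq (d : Fin 2 →₀ ℕ) : degreeOf d = d 0 + d 1 := by
  rw [degreeOf, Finsupp.sum_fintype _ _ (fun _ => rfl), Fin.sum_univ_two]

lemma pair_eq (a b : ℕ) (d : Fin 2 →₀ ℕ) :
    single (0 : Fin 2) a + single 1 b = d ↔ a = d 0 ∧ b = d 1 := by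
  constructor
  · rintro rfl; simp
  · rintro ⟨rfl, rfl⟩
    ext i
    fin_cases i <;> simp [Finsupp.single_apply]

lemma pair_self (e : Fin 2 →₀ ℕ) : single (0 : Fin 2) (e 0) + single 1 (e 1) = e :=
  (pair_eq _ _ _).2 ⟨rfl, rfl⟩

lemma mem_Iic_iff (e : Fin 2 →₀ ℕ) (N : ℕ) :
    e ∈ Finset.Iic (Finsupp.equivFunOnFinite.symm fun _ => N) ↔ ∀ i, e i ≤ N := by
  simp [Finset.mem_Iic, Finsupp.le_def]


lemma self_mem_Iic (d : Fin 2 →₀ ℕ) :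
    d ∈ Finset.Iic (Finsupp.equivFunOnFinite.symm fun _ => degreeOf d) := by
  rw [mem_Iic_iff]
  intro i
  fin_cases i <;> simp [degreeOf_eq]

lemma coeff_Dmap_prod (ν : ℂ) (a b : ℕ) (d : Fin 2 →₀ ℕ) :
    MvPowerSeries.coeff d ((MvPowerSeries.C ν * MvPowerSeries.X 0) ^ a *
      (MvPowerSeries.C ν⁻¹ * MvPowerSeries.X 1) ^ b) =
      if single (0 : Fin 2) a + single 1 b = d then ν ^ a * ν⁻¹ ^ b else 0 := by
  have : (MvPowerSeries.C ν * MvPowerSeries.X 0) ^ a *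
      (MvPowerSeries.C ν⁻¹ * MvPowerSeries.X 1) ^ b =
      MvPowerSeries.C (ν ^ a * ν⁻¹ ^ b) *
        MvPowerSeries.monomial (single (0 : Fin 2) a + single 1 b) 1 := by
    rw [mul_pow, mul_pow, ← map_pow, ← map_pow, X_pow_eq, X_pow_eq,
      mul_mul_mul_comm, monomial_mul_monomial, one_mul, map_mul]
  rw [this, coeff_C_mul, coeff_monomial]
  simp only [eq_comm, inv_pow]
  split <;> simp

lemma coeff_substM_Dmap (ν : ℂ) (f : MvPowerSeries (Fin 2) ℂ) (d : Fin 2 →₀ ℕ) :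
    MvPowerSeries.coeff d (substM (Dmap ν) f) =
      ν ^ (d 0) * ν⁻¹ ^ (d 1) * MvPowerSeries.coeff d f := by
  rw [coeff_apply, substM]
  rw [Finset.sum_eq_single d]
  · rw [Fin.prod_univ_two]
    simp only [Dmap, Matrix.cons_val_zero, Matrix.cons_val_one, Matrix.head_cons]
    rw [coeff_Dmap_prod, if_pos (pair_self d)]
    ring
  · intro e _ hne
    rw [Fin.prod_univ_two]
    simp only [Dmap, Matrix.cons_val_zero, Matrix.cons_val_one, Matrix.head_cons]
    rw [coeff_Dmap_prod, if_neg (by rw [pair_self]; exact hne), mul_zero]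
  · intro h
    exact absurd (self_mem_Iic d) h
lemma prod_single_pow (Θ : Fin 2 → MvPowerSeries (Fin 2) ℂ) (i : Fin 2) :
    (∏ j, Θ j ^ (single i 1) j) = Θ i := by
  rw [Fin.prod_univ_two]
  fin_cases i <;> simp [Finsupp.single_apply]

lemma coeff_substM_CX (Θ : Fin 2 → MvPowerSeries (Fin 2) ℂ)
    (h0 : ∀ i, MvPowerSeries.constantCoeff (Θ i) = 0)
    (μ : ℂ) (i : Fin 2) (d : Fin 2 →₀ ℕ) :
    MvPowerSeries.coeff d (substM Θ (MvPowerSeries.C μ * MvPowerSeries.X i)) =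
      μ * MvPowerSeries.coeff d (Θ i) := by
  rw [coeff_apply, substM]
  have hco : ∀ e : Fin 2 →₀ ℕ,
      MvPowerSeries.coeff e (MvPowerSeries.C μ * MvPowerSeries.X i) =
        if e = single i 1 then μ else 0 := by
    intro e
    rw [coeff_C_mul, coeff_X]
    split <;> simp
  by_cases hd : d = 0
  · subst hd
    have : degreeOf (0 : Fin 2 →₀ ℕ) = 0 := by simp [degreeOf_eq]
    rw [this]
    have hIic : Finset.Iic (Finsupp.equivFunOnFinite.symm fun _ : Fin 2 => (0:ℕ)) = {0} := by
      ext e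
      rw [mem_Iic_iff]
      simp [Finsupp.ext_iff, Nat.le_zero]
    rw [hIic, Finset.sum_singleton, hco]
    have h1 : (0 : Fin 2 →₀ ℕ) ≠ single i 1 := by
      intro h
      have := congrFun (congrArg (⇑) h) i
      simp at this
    rw [if_neg h1, zero_mul, MvPowerSeries.coeff_zero_eq_constantCoeff, h0 i, mul_zero]
  · have hdeg : 1 ≤ degreeOf d := by
      rcases Nat.eq_zero_or_pos (degreeOf d) with h | h
      · exfalso
        apply hd
        rw [degreeOf_eq] at h
        have h0' : d 0 = 0 ∧ d 1 = 0 := by omega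
        ext j
        fin_cases j
        · simpa using h0'.1
        · simpa using h0'.2
      · exact h
    rw [Finset.sum_eq_single (single i 1)]
    · rw [hco, if_pos rfl, prod_single_pow]
    · intro e _ hne
      rw [hco, if_neg hne, zero_mul]
    · intro h
      exfalso
      apply h
      rw [mem_Iic_iff]
      intro j
      calc (single i 1) j ≤ 1 := by simp [Finsupp.single_apply]; split <;> omega
        _ ≤ degreeOf d := hdeg
lemma coeff_pXY_pow (j : ℕ) (d : Fin 2 →₀ ℕ) :
    MvPowerSeries.coeff d (pXY ^ j) = if j = d 0 ∧ j = d 1 then 1 else 0 := by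
  have : pXY ^ j = MvPowerSeries.monomial (single (0 : Fin 2) j + single 1 j) 1 := by
    rw [pXY, mul_pow, X_pow_eq, X_pow_eq, monomial_mul_monomial, one_mul]
  rw [this, coeff_monomial]
  by_cases h : single (0 : Fin 2) j + single 1 j = d
  · rw [if_pos h.symm, if_pos]
    exact (pair_eq j j d).1 h
  · rw [if_neg (fun hh => h hh.symm), if_neg]
    intro hc
    exact h ((pair_eq j j d).2 hc)

lemma coeff_substPM (φ : PowerSeries ℂ) (d : Fin 2 →₀ ℕ) :
    MvPowerSeries.coeff d (substPM pXY φ) =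
      if d 0 = d 1 then PowerSeries.coeff (d 0) φ else 0 := by
  rw [coeff_apply, substPM]
  by_cases h : d 0 = d 1
  · rw [if_pos h, Finset.sum_eq_single (d 0)]
    · rw [coeff_pXY_pow, if_pos ⟨rfl, h⟩, mul_one]
    · intro j _ hne
      rw [coeff_pXY_pow, if_neg (fun hc => hne hc.1), mul_zero]
    · intro hc
      exfalso
      apply hc
      rw [Finset.mem_range, degreeOf_eq]
      omega
  · rw [if_neg h]
    apply Finset.sum_eq_zero
    intro j _
    rw [coeff_pXY_pow, if_neg, mul_zero]
    rintro ⟨rfl, hc⟩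
    exact h hc

lemma coeff_X1_mul (φ : PowerSeries ℂ) (d : Fin 2 →₀ ℕ) :
    MvPowerSeries.coeff d (MvPowerSeries.X 1 * substPM pXY φ) =
      if d 1 = d 0 + 1 then PowerSeries.coeff (d 0) φ else 0 := by
  rw [show (MvPowerSeries.X 1 : MvPowerSeries (Fin 2) ℂ) =
      MvPowerSeries.monomial (single 1 1) 1 from rfl, coeff_monomial_mul]
  by_cases hle : single (1 : Fin 2) 1 ≤ d
  · have h1 : 1 ≤ d 1 := Finsupp.single_le_iff.1 hle
    rw [if_pos hle, one_mul, coeff_substPM, Finsupp.tsub_apply, Finsupp.tsub_apply]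
    have e0 : (single (1 : Fin 2) 1) 0 = 0 := by simp
    have e1 : (single (1 : Fin 2) 1) 1 = 1 := by simp
    rw [e0, e1, Nat.sub_zero]
    by_cases h : d 0 = d 1 - 1
    · rw [if_pos h, if_pos (by omega)]
    · rw [if_neg h, if_neg (by omega)]
  · have : ¬ 1 ≤ d 1 := fun h => hle (Finsupp.single_le_iff.2 h)
    rw [if_neg hle, if_neg (by omega)]

lemma coeff_X0_mul (ψ : PowerSeries ℂ) (d : Fin 2 →₀ ℕ) :
    MvPowerSeries.coeff d (MvPowerSeries.X 0 * substPM pXY ψ) =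
      if d 0 = d 1 + 1 then PowerSeries.coeff (d 1) ψ else 0 := by
  rw [show (MvPowerSeries.X 0 : MvPowerSeries (Fin 2) ℂ) =
      MvPowerSeries.monomial (single 0 1) 1 from rfl, coeff_monomial_mul]
  by_cases hle : single (0 : Fin 2) 1 ≤ d
  · have h1 : 1 ≤ d 0 := Finsupp.single_le_iff.1 hle
    rw [if_pos hle, one_mul, coeff_substPM, Finsupp.tsub_apply, Finsupp.tsub_apply]
    have e0 : (single (0 : Fin 2) 1) 0 = 1 := by simp
    have e1 : (single (0 : Fin 2) 1) 1 = 0 := by simp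
    rw [e0, e1, Nat.sub_zero]
    by_cases h : d 0 - 1 = d 1
    · rw [if_pos h, if_pos (by omega), h]
    · rw [if_neg h, if_neg (by omega)]
  · have : ¬ 1 ≤ d 0 := fun h => hle (Finsupp.single_le_iff.2 h)
    rw [if_neg hle, if_neg (by omega)]

lemma two_pow_ne {a b : ℕ} (h : a ≠ b) : (2 : ℂ) ^ a ≠ (2 : ℂ) ^ b := by
  intro hc
  apply h
  have : ((2 ^ a : ℕ) : ℂ) = ((2 ^ b : ℕ) : ℂ) := by push_cast; exact hc
  exact Nat.pow_right_injective (le_refl 2) (Nat.cast_inj.1 this)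

lemma cond_iff_support (Θ : FormalMap 2)
    (h0 : ∀ i, MvPowerSeries.constantCoeff (Θ i) = 0) :
    (∀ μ : ℂ, μ ≠ 0 → compM (Dmap μ) Θ = compM Θ (Dmap μ⁻¹)) ↔
      ((∀ d : Fin 2 →₀ ℕ, d 1 ≠ d 0 + 1 → MvPowerSeries.coeff d (Θ 0) = 0) ∧
       (∀ d : Fin 2 →₀ ℕ, d 0 ≠ d 1 + 1 → MvPowerSeries.coeff d (Θ 1) = 0)) := by
  constructor
  · intro H
    have H2 := H 2 two_ne_zero
    constructor
    · intro d hd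
      have e1 : MvPowerSeries.coeff d
            (substM Θ (MvPowerSeries.C 2 * MvPowerSeries.X 0)) =
          MvPowerSeries.coeff d (substM (Dmap 2⁻¹) (Θ 0)) := by
        have := congrFun (congrFun H2 0) d
        simpa [compM, Dmap, coeff_apply] using this
      rw [coeff_substM_CX Θ h0, coeff_substM_Dmap, inv_inv] at e1
      set c := MvPowerSeries.coeff d (Θ 0) with hc
      by_contra hcne
      have e2 : (2 : ℂ) ^ (d 0 + 1) * c = (2 : ℂ) ^ (d 1) * c := by
        calc (2 : ℂ) ^ (d 0 + 1) * c = 2 ^ (d 0) * (2 * c) := by ring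
          _ = 2 ^ (d 0) * ((2 : ℂ)⁻¹ ^ (d 0) * 2 ^ (d 1) * c) := by rw [e1]
          _ = (2 ^ (d 0) * (2 : ℂ)⁻¹ ^ (d 0)) * 2 ^ (d 1) * c := by ring
          _ = 2 ^ (d 1) * c := by
              rw [← mul_pow, mul_inv_cancel₀ two_ne_zero, one_pow, one_mul]
      exact two_pow_ne (by omega) (mul_right_cancel₀ hcne e2)
    · intro d hd
      have e1 : MvPowerSeries.coeff d
            (substM Θ (MvPowerSeries.C 2⁻¹ * MvPowerSeries.X 1)) =
          MvPowerSeries.coeff d (substM (Dmap 2⁻¹) (Θ 1)) := by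
        have := congrFun (congrFun H2 1) d
        simpa [compM, Dmap, coeff_apply] using this
      rw [coeff_substM_CX Θ h0, coeff_substM_Dmap, inv_inv] at e1
      set c := MvPowerSeries.coeff d (Θ 1) with hc
      by_contra hcne
      have e2 : (2 : ℂ) ^ (d 0) * c = (2 : ℂ) ^ (d 1 + 1) * c := by
        calc (2 : ℂ) ^ (d 0) * c = 2 ^ (d 0) * (2 * ((2 : ℂ)⁻¹ * c)) := by
              field_simp
          _ = 2 ^ (d 0) * (2 * ((2 : ℂ)⁻¹ ^ (d 0) * 2 ^ (d 1) * c)) := by rw [e1]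
          _ = (2 ^ (d 0) * (2 : ℂ)⁻¹ ^ (d 0)) * (2 * 2 ^ (d 1) * c) := by ring
          _ = 2 ^ (d 1 + 1) * c := by
              rw [← mul_pow, mul_inv_cancel₀ two_ne_zero, one_pow, one_mul, pow_succ]
              ring
      exact two_pow_ne (by omega) (mul_right_cancel₀ hcne e2)
  · rintro ⟨S0, S1⟩ μ hμ
    have key : ∀ a : ℕ, (μ⁻¹) ^ a * μ ^ a = 1 := fun a => by
      rw [inv_pow, inv_mul_cancel₀ (pow_ne_zero _ hμ)]
    funext i d
    have base : ∀ j : Fin 2, (compM Θ (Dmap μ⁻¹)) j d =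
        (μ⁻¹) ^ (d 0) * μ ^ (d 1) * MvPowerSeries.coeff d (Θ j) := by
      intro j
      have := coeff_substM_Dmap μ⁻¹ (Θ j) d
      rw [inv_inv] at this
      simpa [compM, coeff_apply] using this
    have hi : i = 0 ∨ i = 1 := by omega
    rcases hi with rfl | rfl
    · have l : (compM (Dmap μ) Θ) 0 d = μ * MvPowerSeries.coeff d (Θ 0) := by
        have := coeff_substM_CX Θ h0 μ 0 d
        simpa [compM, Dmap, coeff_apply] using this
      rw [l, base 0]
      by_cases hc : MvPowerSeries.coeff d (Θ 0) = 0
      · rw [hc, mul_zero, mul_zero]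
      · have hd : d 1 = d 0 + 1 := by
          by_contra h
          exact hc (S0 d h)
        rw [hd, pow_succ, ← mul_assoc, key, one_mul]
    · have l : (compM (Dmap μ) Θ) 1 d = μ⁻¹ * MvPowerSeries.coeff d (Θ 1) := by
        have := coeff_substM_CX Θ h0 μ⁻¹ 1 d
        simpa [compM, Dmap, coeff_apply] using this
      rw [l, base 1]
      by_cases hc : MvPowerSeries.coeff d (Θ 1) = 0
      · rw [hc, mul_zero, mul_zero]
      · have hd : d 0 = d 1 + 1 := by
          by_contra h
          exact hc (S1 d h)
        rw [hd, pow_succ, mul_right_comm _ μ⁻¹, key, one_mul]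

lemma support_repr (Θ : FormalMap 2) (hdet : (linMatrix Θ).det ≠ 0)
    (S0 : ∀ d : Fin 2 →₀ ℕ, d 1 ≠ d 0 + 1 → MvPowerSeries.coeff d (Θ 0) = 0)
    (S1 : ∀ d : Fin 2 →₀ ℕ, d 0 ≠ d 1 + 1 → MvPowerSeries.coeff d (Θ 1) = 0) :
    ∃ φ ψ : PowerSeries ℂ,
      PowerSeries.constantCoeff φ ≠ 0 ∧ PowerSeries.constantCoeff ψ ≠ 0 ∧
      Θ = ![MvPowerSeries.X 1 * substPM pXY φ, MvPowerSeries.X 0 * substPM pXY ψ] := by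
  have z00 : MvPowerSeries.coeff (single (0 : Fin 2) 1) (Θ 0) = 0 := by
    apply S0
    simp [Finsupp.single_apply]
  have z11 : MvPowerSeries.coeff (single (1 : Fin 2) 1) (Θ 1) = 0 := by
    apply S1
    simp [Finsupp.single_apply]
  have hM : MvPowerSeries.coeff (single (1 : Fin 2) 1) (Θ 0) ≠ 0 ∧
      MvPowerSeries.coeff (single (0 : Fin 2) 1) (Θ 1) ≠ 0 := by
    rw [Matrix.det_fin_two] at hdet
    simp only [linMatrix] at hdet
    rw [z00, z11] at hdet
    constructor <;> intro h <;> apply hdet <;> simp [h]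
  refine ⟨PowerSeries.mk fun k => MvPowerSeries.coeff (single 0 k + single 1 (k + 1)) (Θ 0),
    PowerSeries.mk fun k => MvPowerSeries.coeff (single 0 (k + 1) + single 1 k) (Θ 1),
    ?_, ?_, ?_⟩
  · rw [← PowerSeries.coeff_zero_eq_constantCoeff, PowerSeries.coeff_mk]
    simpa using hM.1
  · rw [← PowerSeries.coeff_zero_eq_constantCoeff, PowerSeries.coeff_mk]
    simpa using hM.2
  · funext i
    have hi : i = 0 ∨ i = 1 := by omega
    rcases hi with rfl | rfl
    · rw [Matrix.cons_val_zero]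
      apply MvPowerSeries.ext
      intro d
      rw [coeff_X1_mul]
      by_cases h : d 1 = d 0 + 1
      · rw [if_pos h, PowerSeries.coeff_mk,
          (pair_eq (d 0) (d 0 + 1) d).2 ⟨rfl, h.symm⟩]
      · rw [if_neg h]
        exact S0 d h
    · rw [Matrix.cons_val_one, Matrix.cons_val_zero]
      apply MvPowerSeries.ext
      intro d
      rw [coeff_X0_mul]
      by_cases h : d 0 = d 1 + 1
      · rw [if_pos h, PowerSeries.coeff_mk,
          (pair_eq (d 1 + 1) (d 1) d).2 ⟨h.symm, rfl⟩]
      · rw [if_neg h]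
        exact S1 d h

end Helpers

/-- The swap J(z₁,z₂) = (z₂,z₁) reverses every diagonal matrix diag(μ,μ⁻¹); more
generally an invertible formal map Θ of ℂ² reverses every element of
D = {diag(μ,μ⁻¹) : μ ≠ 0} (i.e. Λ ∘ Θ = Θ ∘ Λ⁻¹ for all Λ ∈ D) if and only if
Θ(z₁,z₂) = (z₂φ(z₁z₂), z₁ψ(z₁z₂)) with φ(0) ≠ 0 ≠ ψ(0). -/
theorem reverses_diagonal_iff (Θ : FormalMap 2)
    (hΘ0 : ∀ i, MvPowerSeries.constantCoeff (Θ i) = 0)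
    (hΘlin : (linMatrix Θ).det ≠ 0) :
    (∀ μ : ℂ, μ ≠ 0 →
        !![(0 : ℂ), 1; 1, 0] * Matrix.diagonal ![μ, μ⁻¹] * !![(0 : ℂ), 1; 1, 0] =
          Matrix.diagonal ![μ⁻¹, μ]) ∧
      ((∀ μ : ℂ, μ ≠ 0 → compM (Dmap μ) Θ = compM Θ (Dmap μ⁻¹)) ↔
        ∃ φ ψ : PowerSeries ℂ,
          PowerSeries.constantCoeff φ ≠ 0 ∧ PowerSeries.constantCoeff ψ ≠ 0 ∧
          Θ = ![MvPowerSeries.X 1 * substPM pXY φ, MvPowerSeries.X 0 * substPM pXY ψ]) := by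
  constructor
  · intro μ hμ
    ext i j
    fin_cases i <;> fin_cases j <;>
      simp [Matrix.mul_apply, Matrix.vecMul, dotProduct, Fin.sum_univ_two,
        Matrix.diagonal_apply]
  · rw [cond_iff_support Θ hΘ0]
    constructor
    · rintro ⟨S0, S1⟩
      exact support_repr Θ hΘlin S0 S1
    · rintro ⟨φ, ψ, hφ, hψ, rfl⟩
      constructor
      · intro d hd
        have : (![MvPowerSeries.X 1 * substPM pXY φ,
            MvPowerSeries.X 0 * substPM pXY ψ] : FormalMap 2) 0 =
            MvPowerSeries.X 1 * substPM pXY φ := rfl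
        rw [this, coeff_X1_mul, if_neg hd]
      · intro d hd
        have : (![MvPowerSeries.X 1 * substPM pXY φ,
            MvPowerSeries.X 0 * substPM pXY ψ] : FormalMap 2) 1 =
            MvPowerSeries.X 0 * substPM pXY ψ := rfl
        rw [this, coeff_X0_mul, if_neg hd]


end
end

section
/- Let ρ(t) = t + higher order terms be a formal power series reversed by the rotation t ↦ ωt where ω = c⁻², and let ρ^{1/2} denote the formal square root iterate of ρ (the unique series t + … with ρ^{1/2} ∘ ρ^{1/2} = ρ). Then the map F(z₁,z₂) = (z₁ρ(p)/ρ^{1/2}(p), z₂ρ^{1/2}(p)/p), p = z₁z₂, is reversed by J_c(z₁,z₂) = (cz₂, cz₁). -/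
noncomputable section

namespace My
open PowerSeries Finset

lemma coeff_compP (f g : PowerSeries ℂ) (n : ℕ) :
    coeff n (compP f g) = ∑ j ∈ range (n + 1), coeff j f * coeff n (g ^ j) := by
  simp [compP]

lemma coeff_pow_eq_zero {g : PowerSeries ℂ} (hg : constantCoeff g = 0) {j n : ℕ}
    (h : n < j) : coeff n (g ^ j) = 0 := by
  have : (X : PowerSeries ℂ) ^ j ∣ g ^ j :=
    pow_dvd_pow_of_dvd (PowerSeries.X_dvd_iff.mpr hg) j
  exact PowerSeries.X_pow_dvd_iff.mp this n h

lemma coeff_compP_padded {g : PowerSeries ℂ} (hg : constantCoeff g = 0)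
    (f : PowerSeries ℂ) {n N : ℕ} (hN : n ≤ N) :
    coeff n (compP f g) = ∑ j ∈ range (N + 1), coeff j f * coeff n (g ^ j) := by
  rw [coeff_compP]
  refine Finset.sum_subset (by intro x hx; simp at hx ⊢; omega) ?_
  intro j hj hj'
  simp only [mem_range] at hj hj'
  rw [coeff_pow_eq_zero hg (by omega), mul_zero]

lemma compP_C (a : ℂ) (g : PowerSeries ℂ) : compP (C a) g = C a := by
  ext n
  rw [coeff_compP]
  rcases Nat.eq_zero_or_pos n with h | h
  · subst h; simp
  · rw [Finset.sum_eq_single 0]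
    · simp [PowerSeries.coeff_one, PowerSeries.coeff_C, h.ne']
    · intro j hj hj0; simp [PowerSeries.coeff_C, hj0]
    · simp

lemma compP_one (g : PowerSeries ℂ) : compP 1 g = 1 := by
  simpa using compP_C 1 g

lemma compP_X (f : PowerSeries ℂ) : compP f X = f := by
  ext n
  rw [coeff_compP]
  rw [Finset.sum_eq_single n]
  · simp [PowerSeries.coeff_X_pow]
  · intro j _ hj; simp [PowerSeries.coeff_X_pow, Ne.symm hj]
  · intro h; simp at h

lemma X_compP {g : PowerSeries ℂ} (hg : constantCoeff g = 0) : compP X g = g := by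
  ext n
  rw [coeff_compP]
  rcases Nat.eq_zero_or_pos n with h | h
  · subst h; simp [PowerSeries.coeff_X, hg]
  · rw [Finset.sum_eq_single 1]
    · simp
    · intro j hj hj1; simp [PowerSeries.coeff_X, hj1]
    · intro h1; simp at h1; omega

lemma compP_add (f₁ f₂ g : PowerSeries ℂ) :
    compP (f₁ + f₂) g = compP f₁ g + compP f₂ g := by
  ext n
  simp [coeff_compP, add_mul, Finset.sum_add_distrib]

lemma compP_Cmul (a : ℂ) (f g : PowerSeries ℂ) :
    compP (C a * f) g = C a * compP f g := by
  ext n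
  simp [coeff_compP, Finset.mul_sum, mul_assoc]

lemma constantCoeff_compP (g f : PowerSeries ℂ) : constantCoeff (compP f g) = constantCoeff f := by
  have := coeff_compP f g 0
  simp only [zero_add, range_one, sum_singleton, pow_zero] at this
  simpa [coeff_zero_eq_constantCoeff] using this

lemma coeff_one_compP (f g : PowerSeries ℂ) :
    coeff 1 (compP f g) = coeff 1 f * coeff 1 g := by
  rw [coeff_compP]
  rw [show (1:ℕ)+1 = 2 by rfl, Finset.sum_range_succ, Finset.sum_range_one]
  simp


lemma compP_mul {g : PowerSeries ℂ} (hg : constantCoeff g = 0) (f₁ f₂ : PowerSeries ℂ) :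
    compP (f₁ * f₂) g = compP f₁ g * compP f₂ g := by
  ext n
  set T : ℕ × ℕ → ℂ := fun p =>
    coeff p.1 f₁ * coeff p.2 f₂ * coeff n (g ^ (p.1 + p.2)) with hT
  have hL : coeff n (compP (f₁ * f₂) g)
      = ∑ j ∈ range (n+1), ∑ p ∈ antidiagonal j, T p := by
    rw [coeff_compP]
    refine Finset.sum_congr rfl fun j _ => ?_
    rw [PowerSeries.coeff_mul, Finset.sum_mul]
    refine Finset.sum_congr rfl fun p hp => ?_
    rw [Finset.HasAntidiagonal.mem_antidiagonal] at hp
    rw [hT]; simp only []; rw [hp]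
  have hdisj : (↑(range (n+1)) : Set ℕ).PairwiseDisjoint
      (fun j => (antidiagonal j : Finset (ℕ × ℕ))) := by
    intro a _ b _ hab
    exact Finset.disjoint_left.mpr fun p hpa hpb => hab (by
      rw [Finset.HasAntidiagonal.mem_antidiagonal] at hpa hpb; omega)
  have hL2 : coeff n (compP (f₁ * f₂) g)
      = ∑ p ∈ range (n+1) ×ˢ range (n+1), T p := by
    rw [hL, ← Finset.sum_biUnion hdisj]
    refine Finset.sum_subset ?_ ?_
    · intro p hp
      simp only [Finset.mem_biUnion, Finset.HasAntidiagonal.mem_antidiagonal, mem_range] at hp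
      obtain ⟨j, hj, hpj⟩ := hp
      simp only [Finset.mem_product, mem_range]
      omega
    · intro p hp hnp
      have hgt : n < p.1 + p.2 := by
        by_contra hle
        exact hnp (Finset.mem_biUnion.mpr ⟨p.1 + p.2, by simp; omega,
          by rw [Finset.HasAntidiagonal.mem_antidiagonal]⟩)
      show T p = 0
      rw [hT]; simp only []
      rw [coeff_pow_eq_zero hg hgt, mul_zero]
  have hR : coeff n (compP f₁ g * compP f₂ g)
      = ∑ p ∈ range (n+1) ×ˢ range (n+1), T p := by
    rw [PowerSeries.coeff_mul]
    have : ∀ q ∈ antidiagonal n,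
        coeff q.1 (compP f₁ g) * coeff q.2 (compP f₂ g)
        = ∑ p ∈ range (n+1) ×ˢ range (n+1),
            coeff p.1 f₁ * coeff p.2 f₂ * (coeff q.1 (g ^ p.1) * coeff q.2 (g ^ p.2)) := by
      intro q hq
      rw [Finset.HasAntidiagonal.mem_antidiagonal] at hq
      rw [coeff_compP_padded hg f₁ (show q.1 ≤ n by omega),
          coeff_compP_padded hg f₂ (show q.2 ≤ n by omega), Finset.sum_mul_sum,
          ← Finset.sum_product']
      refine Finset.sum_congr rfl fun p _ => by ring
    rw [Finset.sum_congr rfl this, Finset.sum_comm]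
    refine Finset.sum_congr rfl fun p _ => ?_
    rw [hT]; simp only []
    rw [pow_add, PowerSeries.coeff_mul, Finset.mul_sum]
  rw [hL2, hR]

lemma compP_pow {g : PowerSeries ℂ} (hg : constantCoeff g = 0) (f : PowerSeries ℂ) (k : ℕ) :
    compP (f ^ k) g = compP f g ^ k := by
  induction k with
  | zero => simpa using compP_one g
  | succ k ih => rw [pow_succ, pow_succ, compP_mul hg, ih]

lemma compP_assoc {g k : PowerSeries ℂ} (hg : constantCoeff g = 0)
    (hk : constantCoeff k = 0) (f : PowerSeries ℂ) :
    compP (compP f g) k = compP f (compP g k) := by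
  ext n
  rw [coeff_compP, coeff_compP]
  have h1 : ∀ j ∈ range (n+1),
      coeff j (compP f g) * coeff n (k ^ j)
      = ∑ i ∈ range (n+1), coeff i f * coeff j (g ^ i) * coeff n (k ^ j) := by
    intro j hj
    rw [mem_range] at hj
    rw [coeff_compP_padded hg f (show j ≤ n by omega), Finset.sum_mul]
  rw [Finset.sum_congr rfl h1, Finset.sum_comm]
  refine Finset.sum_congr rfl fun i _ => ?_
  rw [← compP_pow hk, coeff_compP]
  have hck : constantCoeff (compP g k) = 0 := by
    rw [constantCoeff_compP, hg]
  rw [Finset.mul_sum]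
  exact Finset.sum_congr rfl fun j _ => by ring


lemma coeff_pow_congr {s t : PowerSeries ℂ} (hs : constantCoeff s = 0)
    (ht : constantCoeff t = 0) {n : ℕ} (hagree : ∀ m < n, coeff m s = coeff m t)
    {j : ℕ} (hj : 2 ≤ j) : coeff n (s ^ j) = coeff n (t ^ j) := by
  have hdvd1 : (X : PowerSeries ℂ) ^ n ∣ (s - t) := by
    rw [PowerSeries.X_pow_dvd_iff]
    intro m hm
    rw [map_sub, hagree m hm, sub_self]
  have hdvd2 : (X : PowerSeries ℂ) ∣ ∑ i ∈ range j, s ^ i * t ^ (j - 1 - i) := by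
    refine Finset.dvd_sum fun i _ => ?_
    rcases Nat.eq_zero_or_pos i with h | h
    · subst h
      simp only [pow_zero, one_mul]
      exact dvd_pow (PowerSeries.X_dvd_iff.mpr ht) (by omega)
    · exact Dvd.dvd.mul_right (dvd_pow (PowerSeries.X_dvd_iff.mpr hs) h.ne') _
  have hdvd : (X : PowerSeries ℂ) ^ (n + 1) ∣ s ^ j - t ^ j := by
    rw [← geom_sum₂_mul, pow_succ']
    exact mul_dvd_mul hdvd2 hdvd1
  have := PowerSeries.X_pow_dvd_iff.mp hdvd n (by omega)
  rw [map_sub, sub_eq_zero] at this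
  exact this

lemma coeff_pow_self {s : PowerSeries ℂ} (hs : constantCoeff s = 0) (n : ℕ) :
    coeff n (s ^ n) = (coeff 1 s) ^ n := by
  induction n with
  | zero => simp
  | succ n ih =>
    rw [pow_succ, PowerSeries.coeff_mul, Finset.sum_eq_single (n, 1)]
    · rw [ih, pow_succ]
    · intro p hp hne
      rw [Finset.HasAntidiagonal.mem_antidiagonal] at hp
      have hne' : ¬(p.1 = n ∧ p.2 = 1) := by
        intro ⟨a, b⟩; exact hne (Prod.ext a b)
      rcases Nat.lt_or_ge p.1 n with h | h
      · rw [coeff_pow_eq_zero hs h, zero_mul]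
      · have : p.2 = 0 := by omega
        rw [this, PowerSeries.coeff_zero_eq_constantCoeff, hs, mul_zero]
    · intro h
      exact absurd (Finset.HasAntidiagonal.mem_antidiagonal.mpr (by simp)) h

lemma coeff_compP_self_expand {w : PowerSeries ℂ} (hw0 : constantCoeff w = 0)
    (hw1 : coeff 1 w = 1) (n : ℕ) :
    coeff (n+2) (compP w w)
      = 2 * coeff (n+2) w
        + ∑ i ∈ range n, coeff (i+1+1) w * coeff (n+2) (w ^ (i+1+1)) := by
  rw [coeff_compP, Finset.sum_range_succ, Finset.sum_range_succ', Finset.sum_range_succ']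
  simp only [pow_zero, zero_add, pow_one]
  rw [coeff_pow_self hw0, hw1, one_pow, PowerSeries.coeff_zero_eq_constantCoeff, hw0]
  ring

lemma halfIterate_unique {s t : PowerSeries ℂ} (hs0 : constantCoeff s = 0)
    (ht0 : constantCoeff t = 0) (hs1 : coeff 1 s = 1) (ht1 : coeff 1 t = 1)
    (h : compP s s = compP t t) : s = t := by
  ext n
  induction n using Nat.strong_induction_on with
  | _ n ih =>
  match n, ih with
  | 0, _ => rw [PowerSeries.coeff_zero_eq_constantCoeff, hs0, ht0]
  | 1, _ => rw [hs1, ht1]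
  | (n+2), ih =>
    have hagree : ∀ m < n + 2, coeff m s = coeff m t := fun m hm => ih m hm
    have hc := congrArg (coeff (n+2)) h
    rw [coeff_compP_self_expand hs0 hs1, coeff_compP_self_expand ht0 ht1] at hc
    have hmid : ∀ i ∈ range n,
        coeff (i+1+1) s * coeff (n+2) (s ^ (i+1+1))
        = coeff (i+1+1) t * coeff (n+2) (t ^ (i+1+1)) := by
      intro i hi
      rw [mem_range] at hi
      rw [hagree (i+1+1) (by omega), coeff_pow_congr hs0 ht0 hagree (by omega)]
    rw [Finset.sum_congr rfl hmid] at hc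
    linear_combination hc / 2

def rInvC (f : PowerSeries ℂ) : ℕ → ℂ
  | 0 => 0
  | 1 => (PowerSeries.coeff 1 f)⁻¹
  | n+2 => -(PowerSeries.coeff 1 f)⁻¹ * ∑ i ∈ Finset.range (n+1),
      PowerSeries.coeff (i+1+1) f * PowerSeries.coeff (n+2)
        ((PowerSeries.mk fun m => if h : m < n+2 then rInvC f m else 0) ^ (i+1+1))

lemma compP_rInv {f : PowerSeries ℂ} (h0 : constantCoeff f = 0)
    (h1 : coeff 1 f ≠ 0) :
    compP f (PowerSeries.mk (rInvC f)) = X := by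
  set r := PowerSeries.mk (rInvC f) with hr
  have hr0 : constantCoeff r = 0 := by
    rw [hr, ← PowerSeries.coeff_zero_eq_constantCoeff]
    simp [rInvC]
  ext n
  match n with
  | 0 =>
    rw [coeff_compP]
    simp [h0]
  | 1 =>
    rw [coeff_one_compP]
    have : coeff 1 r = (coeff 1 f)⁻¹ := by simp [hr, rInvC]
    rw [this, mul_inv_cancel₀ h1, PowerSeries.coeff_one_X]
  | (n+2) =>
    rw [coeff_compP, Finset.sum_range_succ', Finset.sum_range_succ']
    simp only [pow_zero, zero_add, pow_one]
    rw [PowerSeries.coeff_zero_eq_constantCoeff, h0]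
    have hS : ∑ i ∈ range (n+1), coeff (i+1+1) f * coeff (n+2) (r ^ (i+1+1))
        = ∑ i ∈ range (n+1), coeff (i+1+1) f * coeff (n+2)
            ((PowerSeries.mk fun m => if h : m < n+2 then rInvC f m else 0) ^ (i+1+1)) := by
      refine Finset.sum_congr rfl fun i _ => ?_
      congr 1
      refine coeff_pow_congr hr0 ?_ ?_ (by omega)
      · rw [← PowerSeries.coeff_zero_eq_constantCoeff]
        simp [rInvC]
      · intro m hm
        rw [hr, PowerSeries.coeff_mk, PowerSeries.coeff_mk, dif_pos hm]
    have hrec : coeff (n+2) r = -(PowerSeries.coeff 1 f)⁻¹ * ∑ i ∈ Finset.range (n+1),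
        PowerSeries.coeff (i+1+1) f * PowerSeries.coeff (n+2)
          ((PowerSeries.mk fun m => if h : m < n+2 then rInvC f m else 0) ^ (i+1+1)) := by
      rw [hr, PowerSeries.coeff_mk, rInvC]
    rw [hS, hrec, PowerSeries.coeff_X, if_neg (by omega),
      neg_mul, mul_neg, ← mul_assoc, mul_inv_cancel₀ h1, one_mul]
    ring

lemma exists_inverse {f : PowerSeries ℂ} (h0 : constantCoeff f = 0)
    (h1 : coeff 1 f ≠ 0) :
    ∃ r : PowerSeries ℂ, constantCoeff r = 0 ∧ coeff 1 r = (coeff 1 f)⁻¹ ∧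
      compP f r = X ∧ compP r f = X := by
  set r := PowerSeries.mk (rInvC f) with hrdef
  have hr0 : constantCoeff r = 0 := by
    rw [hrdef, ← PowerSeries.coeff_zero_eq_constantCoeff]; simp [rInvC]
  have hr1 : coeff 1 r = (coeff 1 f)⁻¹ := by simp [hrdef, rInvC]
  have hfr : compP f r = X := compP_rInv h0 h1
  refine ⟨r, hr0, hr1, hfr, ?_⟩
  have hr1' : coeff 1 r ≠ 0 := by rw [hr1]; exact inv_ne_zero h1
  set r2 := PowerSeries.mk (rInvC r) with hr2def
  have hr20 : constantCoeff r2 = 0 := by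
    rw [hr2def, ← PowerSeries.coeff_zero_eq_constantCoeff]; simp [rInvC]
  have hrr2 : compP r r2 = X := compP_rInv hr0 hr1'
  have : f = r2 := by
    calc f = compP f X := (compP_X f).symm
    _ = compP f (compP r r2) := by rw [hrr2]
    _ = compP (compP f r) r2 := (compP_assoc hr0 hr20 f).symm
    _ = compP X r2 := by rw [hfr]
    _ = r2 := X_compP hr20
  rw [this]
  exact hrr2


lemma constantCoeff_Xmul (f : PowerSeries ℂ) : constantCoeff (X * f) = 0 := by
  rw [map_mul, PowerSeries.constantCoeff_X, zero_mul]

lemma constantCoeff_CXmul (a : ℂ) (f : PowerSeries ℂ) :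
    constantCoeff (C a * (X * f)) = 0 := by
  rw [map_mul, constantCoeff_Xmul, mul_zero]

lemma compP_CX (a : ℂ) {Z : PowerSeries ℂ} (hZ : constantCoeff Z = 0) :
    compP (C a * X) Z = C a * Z := by
  rw [compP_Cmul, X_compP hZ]

lemma one_var_main {c : ℂ} (hc : c ≠ 0) {u v : PowerSeries ℂ}
    (hu0 : constantCoeff u = 1) (hv0 : constantCoeff v = 1)
    (hrev : compP (X * u) (C (c * c)⁻¹ * (X * u)) = C (c * c)⁻¹ * X)
    (hhalf : compP (X * v) (X * v) = X * u) :
    v * compP (u * v⁻¹) (C (c * c) * (X * u)) = 1 ∧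
      (u * v⁻¹) * compP v (C (c * c) * (X * u)) = 1 := by
  have hcc : c * c ≠ 0 := mul_ne_zero hc hc
  set ω : ℂ := (c * c)⁻¹ with hωdef
  have hω : ω ≠ 0 := inv_ne_zero hcc
  set ρ : PowerSeries ℂ := X * u with hρdef
  set h : PowerSeries ℂ := X * v with hhdef
  set R : PowerSeries ℂ := C ω * X with hRdef
  set Ri : PowerSeries ℂ := C (c * c) * X with hRidef
  set b : PowerSeries ℂ := C ω * ρ with hbdef
  set a : PowerSeries ℂ := C (c * c) * ρ with hadef
  -- constant coefficients
  have hρ0 : constantCoeff ρ = 0 := constantCoeff_Xmul u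
  have hh0 : constantCoeff h = 0 := constantCoeff_Xmul v
  have hR0 : constantCoeff R = 0 := by
    rw [hRdef, map_mul, PowerSeries.constantCoeff_X, mul_zero]
  have hRi0 : constantCoeff Ri = 0 := by
    rw [hRidef, map_mul, PowerSeries.constantCoeff_X, mul_zero]
  have hb0 : constantCoeff b = 0 := by rw [hbdef, map_mul, hρ0, mul_zero]
  have ha0 : constantCoeff a = 0 := by rw [hadef, map_mul, hρ0, mul_zero]
  -- linear coefficients
  have hρ1 : coeff 1 ρ = 1 := by
    rw [hρdef, show (1:ℕ) = 0 + 1 by rfl, PowerSeries.coeff_succ_X_mul,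
      PowerSeries.coeff_zero_eq_constantCoeff, hu0]
  have hh1 : coeff 1 h = 1 := by
    rw [hhdef, show (1:ℕ) = 0 + 1 by rfl, PowerSeries.coeff_succ_X_mul,
      PowerSeries.coeff_zero_eq_constantCoeff, hv0]
  have hR1 : coeff 1 R = ω := by
    rw [hRdef, PowerSeries.coeff_C_mul, PowerSeries.coeff_one_X, mul_one]
  have hRi1 : coeff 1 Ri = c * c := by
    rw [hRidef, PowerSeries.coeff_C_mul, PowerSeries.coeff_one_X, mul_one]
  have hωcc : ω * (c * c) = 1 := inv_mul_cancel₀ hcc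
  have hccω : (c * c) * ω = 1 := mul_inv_cancel₀ hcc
  -- R and Ri are inverse
  have hRRi : compP R Ri = X := by
    rw [hRdef, compP_CX ω hRi0, hRidef, ← mul_assoc, ← map_mul, hωcc, map_one, one_mul]
  have hRiR : compP Ri R = X := by
    rw [hRidef, compP_CX (c*c) hR0, hRdef, ← mul_assoc, ← map_mul, hccω, map_one, one_mul]
  -- the conjugate g = Ri ∘ h ∘ R
  set g : PowerSeries ℂ := compP (compP Ri h) R with hgdef
  have hRih0 : constantCoeff (compP Ri h) = 0 := by
    rw [constantCoeff_compP, hRi0]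
  have hg0 : constantCoeff g = 0 := by rw [hgdef, constantCoeff_compP, hRih0]
  have hg1 : coeff 1 g = 1 := by
    rw [hgdef, coeff_one_compP, coeff_one_compP, hRi1, hh1, hR1, mul_one, hccω]
  -- compP R g = compP h R
  have hRg : compP R g = compP h R := by
    rw [hgdef, ← compP_assoc hRih0 hR0 R, ← compP_assoc hRi0 hh0 R, hRRi, X_compP hh0]
  have hhR0 : constantCoeff (compP h R) = 0 := by rw [constantCoeff_compP, hh0]
  have hRiρ0 : constantCoeff (compP Ri ρ) = 0 := by rw [constantCoeff_compP, hRi0]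
  -- g ∘ g = Ri ∘ ρ ∘ R
  have hgg : compP g g = compP (compP Ri ρ) R := by
    calc compP g g = compP (compP Ri h) (compP R g) := by
          rw [hgdef, compP_assoc hR0 hg0]
    _ = compP (compP Ri h) (compP h R) := by rw [hRg]
    _ = compP Ri (compP h (compP h R)) := compP_assoc hh0 hhR0 Ri
    _ = compP Ri (compP (compP h h) R) := by rw [compP_assoc hh0 hR0 h]
    _ = compP Ri (compP ρ R) := by rw [hhalf]
    _ = compP (compP Ri ρ) R := (compP_assoc hρ0 hR0 Ri).symm
  -- (g∘g)∘ρ = X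
  have hggρ : compP (compP g g) ρ = X := by
    have hb' : compP R ρ = b := by
      rw [hRdef, compP_CX ω hρ0]
    calc compP (compP g g) ρ = compP (compP (compP Ri ρ) R) ρ := by rw [hgg]
    _ = compP (compP Ri ρ) (compP R ρ) := compP_assoc hR0 hρ0 _
    _ = compP (compP Ri ρ) b := by rw [hb']
    _ = compP Ri (compP ρ b) := compP_assoc hρ0 hb0 Ri
    _ = compP Ri R := by rw [hrev]
    _ = X := hRiR
  -- inverse of g
  obtain ⟨k, hk0, hk1', hgk, hkg⟩ := exists_inverse hg0 (by rw [hg1]; exact one_ne_zero)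
  have hk1 : coeff 1 k = 1 := by rw [hk1', hg1, inv_one]
  have hgρ0 : constantCoeff (compP g ρ) = 0 := by rw [constantCoeff_compP, hg0]
  have hZk : compP g ρ = k := by
    have hx : compP g (compP g ρ) = X := by
      rw [← compP_assoc hg0 hρ0 g]; exact hggρ
    calc compP g ρ = compP X (compP g ρ) := (X_compP hgρ0).symm
    _ = compP (compP k g) (compP g ρ) := by rw [hkg]
    _ = compP k (compP g (compP g ρ)) := compP_assoc hg0 hgρ0 k
    _ = compP k X := by rw [hx]
    _ = k := compP_X k
  have hρkk : ρ = compP k k := by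
    calc ρ = compP X ρ := (X_compP hρ0).symm
    _ = compP (compP k g) ρ := by rw [hkg]
    _ = compP k (compP g ρ) := compP_assoc hg0 hρ0 k
    _ = compP k k := by rw [hZk]
  -- uniqueness of half iterate: h = k
  have hhk : h = k := halfIterate_unique hh0 hk0 hh1 hk1 (hhalf.trans hρkk)
  have hgh : compP g h = X := by rw [hhk]; exact hgk
  -- the key reversal for h
  set BH : PowerSeries ℂ := compP R h with hBHdef
  have hBHval : BH = C ω * h := by rw [hBHdef, hRdef]; exact compP_CX ω hh0
  have hBH0 : constantCoeff BH = 0 := by rw [hBHval, map_mul, hh0, mul_zero]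
  have hKey : compP h BH = R := by
    have h1 : compP (compP Ri h) BH = X := by
      rw [hBHdef, ← compP_assoc hR0 hh0 (compP Ri h), ← hgdef]; exact hgh
    have h2 : compP Ri (compP h BH) = X := by
      rw [← compP_assoc hh0 hBH0 Ri]; exact h1
    have hhBH0 : constantCoeff (compP h BH) = 0 := by rw [constantCoeff_compP, hh0]
    have h3 : C (c * c) * compP h BH = X := by
      rw [← compP_CX (c * c) hhBH0, ← hRidef]; exact h2
    calc compP h BH = (C ω * C (c*c)) * compP h BH := by
          rw [← map_mul, hωcc, map_one, one_mul]
    _ = C ω * (C (c*c) * compP h BH) := by ring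
    _ = C ω * X := by rw [h3]
    _ = R := hRdef.symm
  -- nonzero facts
  have hCX : C ω * X ≠ 0 := by
    intro hE
    apply hω
    have := congrArg (coeff 1) hE
    simpa [PowerSeries.coeff_C_mul, PowerSeries.coeff_one_X] using this
  -- v * (v ∘ BH) = 1
  have hvBH : v * compP v BH = 1 := by
    apply mul_left_cancel₀ hCX
    rw [mul_one]
    calc C ω * X * (v * compP v BH)
        = (C ω * (X * v)) * compP v BH := by ring
    _ = BH * compP v BH := by rw [hBHval, hhdef]
    _ = compP X BH * compP v BH := by rw [X_compP hBH0]
    _ = compP (X * v) BH := (compP_mul hBH0 X v).symm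
    _ = compP h BH := by rw [← hhdef]
    _ = R := hKey
    _ = C ω * X := hRdef
  -- u * (u ∘ b) = 1
  have hXne : (X : PowerSeries ℂ) ≠ 0 := PowerSeries.X_ne_zero
  have hub : u * compP u b = 1 := by
    apply mul_left_cancel₀ hCX
    rw [mul_one]
    calc C ω * X * (u * compP u b)
        = (C ω * (X * u)) * compP u b := by ring
    _ = b * compP u b := by rw [hbdef, hρdef]
    _ = compP X b * compP u b := by rw [X_compP hb0]
    _ = compP (X * u) b := (compP_mul hb0 X u).symm
    _ = compP ρ b := by rw [← hρdef]
    _ = R := hrev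
    _ = C ω * X := hRdef
  -- v * (v ∘ h) = u
  have hvvh : v * compP v h = u := by
    apply mul_left_cancel₀ hXne
    calc X * (v * compP v h) = (X * v) * compP v h := by ring
    _ = compP X h * compP v h := by rw [X_compP hh0]
    _ = compP (X * v) h := (compP_mul hh0 X v).symm
    _ = compP h h := by rw [← hhdef]
    _ = ρ := hhalf
    _ = X * u := hρdef
  -- (v∘h)·(v∘b) = 1
  have hBHh : compP BH h = b := by
    rw [hBHval, compP_Cmul, hhalf, ← hbdef]
  have hvBH0 : constantCoeff (compP v BH) = 0 ∨ True := Or.inr trivial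
  have h10 : compP v h * compP v b = 1 := by
    have := congrArg (fun w => compP w h) hvBH
    rw [compP_mul hh0, compP_assoc hBH0 hh0 v, hBHh, compP_one] at this
    exact this
  -- a ∘ b = X
  have hab : compP a b = X := by
    rw [hadef, compP_Cmul, hrev, hRdef, ← mul_assoc, ← map_mul, hccω, map_one, one_mul]
  -- b ∘ a = X
  have hb1 : coeff 1 b = ω := by
    rw [hbdef, PowerSeries.coeff_C_mul, hρ1, mul_one]
  obtain ⟨rb, hrb0, _, hbrb, _⟩ := exists_inverse hb0 (by rw [hb1]; exact hω)
  have hba : compP b a = X := by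
    have h1 : compP (compP b a) b = b := by
      rw [compP_assoc ha0 hb0 b, hab, compP_X]
    calc compP b a = compP (compP b a) X := (compP_X _).symm
    _ = compP (compP b a) (compP b rb) := by rw [hbrb]
    _ = compP (compP (compP b a) b) rb := (compP_assoc hb0 hrb0 _).symm
    _ = compP b rb := by rw [h1]
    _ = X := hbrb
  -- (u∘a)·u = 1
  have hua : compP u a * u = 1 := by
    have := congrArg (fun w => compP w a) hub
    rw [compP_mul ha0, compP_assoc hb0 ha0 u, hba, compP_X, compP_one] at this
    exact this
  -- u·(v∘b) = v
  have huvb : u * compP v b = v := by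
    calc u * compP v b = (v * compP v h) * compP v b := by rw [hvvh]
    _ = v * (compP v h * compP v b) := by ring
    _ = v := by rw [h10, mul_one]
  -- (u∘a)·v = v∘a
  have hstar : compP u a * v = compP v a := by
    have := congrArg (fun w => compP w a) huvb
    rw [compP_mul ha0, compP_assoc hb0 ha0 v, hba, compP_X] at this
    exact this
  -- finish
  have hvinv : v⁻¹ * v = 1 := by
    rw [mul_comm]
    exact PowerSeries.mul_inv_cancel v (by rw [hv0]; exact one_ne_zero)
  constructor
  · rw [compP_mul ha0]
    calc v * (compP u a * compP v⁻¹ a) = (compP u a * v) * compP v⁻¹ a := by ring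
    _ = compP v a * compP v⁻¹ a := by rw [hstar]
    _ = compP (v⁻¹ * v) a := by rw [← compP_mul ha0]; ring_nf
    _ = 1 := by rw [hvinv, compP_one]
  · calc (u * v⁻¹) * compP v a = (u * v⁻¹) * (compP u a * v) := by rw [hstar]
    _ = (compP u a * u) * (v⁻¹ * v) := by ring
    _ = 1 := by rw [hua, hvinv, one_mul]


/-! ### Multivariable layer (n = 2) -/

section MV

abbrev Mv := MvPowerSeries (Fin 2) ℂ

lemma degreeOf_apply (d : Fin 2 →₀ ℕ) : degreeOf d = d 0 + d 1 := by
  rw [degreeOf, Finsupp.sum_fintype _ _ (fun _ => rfl), Fin.sum_univ_two]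

lemma degreeOf_add (d₁ d₂ : Fin 2 →₀ ℕ) :
    degreeOf (d₁ + d₂) = degreeOf d₁ + degreeOf d₂ := by
  simp only [degreeOf_apply, Finsupp.add_apply]; ring

lemma degreeOf_eq_zero {d : Fin 2 →₀ ℕ} (h : degreeOf d = 0) : d = 0 := by
  rw [degreeOf_apply] at h
  ext i
  fin_cases i <;> simp <;> omega

lemma mem_Iic_bound {e : Fin 2 →₀ ℕ} {D : ℕ} :
    e ∈ Finset.Iic (Finsupp.equivFunOnFinite.symm fun _ => D) ↔ e 0 ≤ D ∧ e 1 ≤ D := by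
  rw [Finset.mem_Iic]
  constructor
  · intro h
    exact ⟨h 0, h 1⟩
  · intro ⟨h0, h1⟩ i
    fin_cases i <;> simpa

lemma ord_mul {f g : Mv} {p q : ℕ}
    (hf : ∀ d : Fin 2 →₀ ℕ, degreeOf d < p → MvPowerSeries.coeff d f = 0)
    (hg : ∀ d : Fin 2 →₀ ℕ, degreeOf d < q → MvPowerSeries.coeff d g = 0)
    {d : Fin 2 →₀ ℕ} (hd : degreeOf d < p + q) : MvPowerSeries.coeff d (f * g) = 0 := by
  rw [MvPowerSeries.coeff_mul]
  refine Finset.sum_eq_zero fun P hP => ?_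
  rw [Finset.HasAntidiagonal.mem_antidiagonal] at hP
  have hdd : degreeOf P.1 + degreeOf P.2 = degreeOf d := by rw [← degreeOf_add, hP]
  rcases Nat.lt_or_ge (degreeOf P.1) p with h | h
  · rw [hf P.1 h, zero_mul]
  · rw [hg P.2 (by omega), mul_zero]

lemma ord_pow {f : Mv} (hf : MvPowerSeries.constantCoeff f = 0) (j : ℕ)
    {d : Fin 2 →₀ ℕ} (hd : degreeOf d < j) : MvPowerSeries.coeff d (f ^ j) = 0 := by
  induction j generalizing d with
  | zero => omega
  | succ j ih =>
    rw [pow_succ]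
    refine ord_mul (p := j) (q := 1) (fun e he => ih he) (fun e he => ?_) (by omega)
    have : e = 0 := degreeOf_eq_zero (by omega)
    rw [this]
    simpa [MvPowerSeries.coeff_zero_eq_constantCoeff] using hf


def dg (j : ℕ) : Fin 2 →₀ ℕ := Finsupp.single 0 j + Finsupp.single 1 j

lemma dg_apply0 (j : ℕ) : dg j 0 = j := by
  simp [dg, Finsupp.single_apply]

lemma dg_apply1 (j : ℕ) : dg j 1 = j := by
  simp [dg, Finsupp.single_apply]

lemma eq_dg_iff {e : Fin 2 →₀ ℕ} {j : ℕ} : e = dg j ↔ e 0 = j ∧ e 1 = j := by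
  constructor
  · intro h; subst h; exact ⟨dg_apply0 j, dg_apply1 j⟩
  · intro ⟨h0, h1⟩
    ext i
    fin_cases i
    · simpa [dg_apply0] using h0
    · simpa [dg_apply1] using h1

lemma pXY_pow (j : ℕ) : pXY ^ j = MvPowerSeries.monomial (dg j) 1 := by
  rw [pXY, mul_pow, MvPowerSeries.X_pow_eq, MvPowerSeries.X_pow_eq,
    MvPowerSeries.monomial_mul_monomial, one_mul, dg]

lemma coeff_pXY_pow (e : Fin 2 →₀ ℕ) (j : ℕ) :
    MvPowerSeries.coeff e (pXY ^ j) = if e = dg j then 1 else 0 := by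
  rw [pXY_pow, MvPowerSeries.coeff_monomial]

lemma coeff_E (χ : PowerSeries ℂ) (e : Fin 2 →₀ ℕ) :
    MvPowerSeries.coeff e (substPM pXY χ)
      = if e 0 = e 1 then PowerSeries.coeff (e 0) χ else 0 := by
  have : MvPowerSeries.coeff e (substPM pXY χ)
      = ∑ j ∈ Finset.range (degreeOf e + 1),
          PowerSeries.coeff j χ * MvPowerSeries.coeff e (pXY ^ j) := rfl
  rw [this]
  by_cases h : e 0 = e 1
  · rw [if_pos h, Finset.sum_eq_single (e 0)]
    · rw [coeff_pXY_pow, if_pos (eq_dg_iff.mpr ⟨rfl, h.symm⟩), mul_one]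
    · intro j _ hj
      rw [coeff_pXY_pow, if_neg (fun hc => hj ((eq_dg_iff.mp hc).1.symm)), mul_zero]
    · intro hm
      exfalso
      apply hm
      rw [Finset.mem_range, degreeOf_apply]
      omega
  · rw [if_neg h]
    refine Finset.sum_eq_zero fun j _ => ?_
    rw [coeff_pXY_pow, if_neg (fun hc => ?_), mul_zero]
    obtain ⟨h0, h1⟩ := eq_dg_iff.mp hc
    exact h (h0.trans h1.symm)

lemma E_mul (χ₁ χ₂ : PowerSeries ℂ) :
    substPM pXY (χ₁ * χ₂) = substPM pXY χ₁ * substPM pXY χ₂ := by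
  ext d
  rw [MvPowerSeries.coeff_mul, coeff_E]
  by_cases h : d 0 = d 1
  · rw [if_pos h, PowerSeries.coeff_mul]
    have hterm : ∀ P ∈ Finset.HasAntidiagonal.antidiagonal d,
        MvPowerSeries.coeff P.1 (substPM pXY χ₁) * MvPowerSeries.coeff P.2 (substPM pXY χ₂)
        = if P.1 0 = P.1 1 then
            PowerSeries.coeff (P.1 0) χ₁ * PowerSeries.coeff (P.2 0) χ₂ else 0 := by
      intro P hP
      rw [Finset.HasAntidiagonal.mem_antidiagonal] at hP
      have h0 : P.1 0 + P.2 0 = d 0 := by rw [← hP]; simp [Finsupp.add_apply]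
      have h1 : P.1 1 + P.2 1 = d 1 := by rw [← hP]; simp [Finsupp.add_apply]
      rw [coeff_E, coeff_E]
      by_cases hd : P.1 0 = P.1 1
      · rw [if_pos hd, if_pos hd, if_pos (show P.2 0 = P.2 1 by omega)]
      · rw [if_neg hd, if_neg hd, zero_mul]
    rw [Finset.sum_congr rfl hterm, Finset.sum_ite, Finset.sum_const_zero, add_zero]
    symm
    refine Finset.sum_nbij' (i := fun P => (P.1 0, P.2 0))
      (j := fun p => ((dg p.1, dg p.2) : (Fin 2 →₀ ℕ) × (Fin 2 →₀ ℕ))) ?_ ?_ ?_ ?_ ?_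
    · intro P hP
      simp only [Finset.mem_filter, Finset.HasAntidiagonal.mem_antidiagonal] at hP ⊢
      rw [← hP.1]
      simp [Finsupp.add_apply]
    · intro p hp
      rw [Finset.HasAntidiagonal.mem_antidiagonal] at hp
      simp only [Finset.mem_filter, Finset.HasAntidiagonal.mem_antidiagonal]
      constructor
      · ext i
        fin_cases i
        · simpa [Finsupp.add_apply, dg_apply0] using hp
        · have hd01 := h
          simp [Finsupp.add_apply, dg_apply1]
          omega
      · rw [dg_apply0, dg_apply1]
    · intro P hP
      simp only [Finset.mem_filter, Finset.HasAntidiagonal.mem_antidiagonal] at hP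
      obtain ⟨hPd, hP11⟩ := hP
      have h0 : P.1 0 + P.2 0 = d 0 := by rw [← hPd]; simp [Finsupp.add_apply]
      have h1 : P.1 1 + P.2 1 = d 1 := by rw [← hPd]; simp [Finsupp.add_apply]
      have hP2 : P.2 0 = P.2 1 := by omega
      exact Prod.ext ((eq_dg_iff.mpr ⟨rfl, hP11.symm⟩).symm)
        ((eq_dg_iff.mpr ⟨rfl, hP2.symm⟩).symm)
    · intro p hp
      exact Prod.ext (dg_apply0 p.1) (dg_apply0 p.2)
    · intro P hP
      rfl
  · rw [if_neg h]
    symm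
    refine Finset.sum_eq_zero fun P hP => ?_
    rw [Finset.HasAntidiagonal.mem_antidiagonal] at hP
    have h0 : P.1 0 + P.2 0 = d 0 := by rw [← hP]; simp [Finsupp.add_apply]
    have h1 : P.1 1 + P.2 1 = d 1 := by rw [← hP]; simp [Finsupp.add_apply]
    rw [coeff_E, coeff_E]
    by_cases hd : P.1 0 = P.1 1
    · rw [if_neg (show ¬ P.2 0 = P.2 1 by omega), mul_zero]
    · rw [if_neg hd, zero_mul]

lemma E_one : substPM pXY 1 = 1 := by
  ext d
  rw [coeff_E]
  by_cases h : d 0 = d 1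
  · rw [if_pos h, PowerSeries.coeff_one, MvPowerSeries.coeff_one]
    by_cases h0 : d 0 = 0
    · rw [if_pos h0, if_pos (by ext i; fin_cases i <;> simp <;> omega)]
    · rw [if_neg h0, if_neg (fun hc => h0 (by rw [hc]; simp))]
  · rw [if_neg h, MvPowerSeries.coeff_one, if_neg (fun hc => h (by rw [hc]; simp))]

lemma E_X : substPM pXY PowerSeries.X = pXY := by
  ext d
  rw [coeff_E, show pXY = pXY ^ 1 by rw [pow_one], coeff_pXY_pow]
  by_cases h : d 0 = d 1
  · rw [if_pos h, PowerSeries.coeff_X]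
    by_cases h1 : d 0 = 1
    · rw [if_pos h1, if_pos (eq_dg_iff.mpr ⟨h1, h ▸ h1⟩)]
    · rw [if_neg h1, if_neg (fun hc => h1 (eq_dg_iff.mp hc).1)]
  · rw [if_neg h, if_neg (fun hc => h ((eq_dg_iff.mp hc).1.trans (eq_dg_iff.mp hc).2.symm))]

lemma E_Cmul (a : ℂ) (χ : PowerSeries ℂ) :
    substPM pXY (PowerSeries.C a * χ) = MvPowerSeries.C a * substPM pXY χ := by
  ext d
  rw [MvPowerSeries.coeff_C_mul, coeff_E, coeff_E, PowerSeries.coeff_C_mul]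
  by_cases h : d 0 = d 1
  · rw [if_pos h, if_pos h]
  · rw [if_neg h, if_neg h, mul_zero]

lemma E_pow (χ : PowerSeries ℂ) (j : ℕ) :
    substPM pXY (χ ^ j) = substPM pXY χ ^ j := by
  induction j with
  | zero => simpa using E_one
  | succ j ih => rw [pow_succ, pow_succ, E_mul, ih]

lemma substPM_E {w : PowerSeries ℂ} (hw : PowerSeries.constantCoeff w = 0)
    (χ : PowerSeries ℂ) :
    substPM (substPM pXY w) χ = substPM pXY (compP χ w) := by
  ext e
  have hL : MvPowerSeries.coeff e (substPM (substPM pXY w) χ)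
      = ∑ j ∈ Finset.range (degreeOf e + 1),
          PowerSeries.coeff j χ * MvPowerSeries.coeff e (substPM pXY w ^ j) := rfl
  rw [hL, coeff_E]
  have hterm : ∀ j, MvPowerSeries.coeff e (substPM pXY w ^ j)
      = if e 0 = e 1 then PowerSeries.coeff (e 0) (w ^ j) else 0 := by
    intro j
    rw [← E_pow, coeff_E]
  by_cases h : e 0 = e 1
  · simp only [hterm, if_pos h]
    rw [coeff_compP]
    have hsub : Finset.range (e 0 + 1) ⊆ Finset.range (degreeOf e + 1) := by
      apply Finset.range_subset_range.mpr
      rw [degreeOf_apply]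
      omega
    rw [← Finset.sum_subset hsub]
    intro j hj hj'
    rw [Finset.mem_range] at hj hj'
    rw [coeff_pow_eq_zero hw (by omega), mul_zero]
  · simp only [hterm, if_neg h, mul_zero, Finset.sum_const_zero]

lemma substM_CX {G : FormalMap 2} (hG : ∀ i, MvPowerSeries.constantCoeff (G i) = 0)
    (a : ℂ) (i : Fin 2) :
    substM G (MvPowerSeries.C a * MvPowerSeries.X i)
      = MvPowerSeries.C a * G i := by
  ext d
  have hL : MvPowerSeries.coeff d (substM G (MvPowerSeries.C a * MvPowerSeries.X i))
      = ∑ e ∈ Finset.Iic (Finsupp.equivFunOnFinite.symm fun _ => degreeOf d),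
          MvPowerSeries.coeff e (MvPowerSeries.C a * MvPowerSeries.X i)
            * MvPowerSeries.coeff d (∏ k, G k ^ e k) := rfl
  rw [hL, MvPowerSeries.coeff_C_mul, Finset.sum_eq_single (Finsupp.single i 1)]
  · rw [MvPowerSeries.coeff_C_mul, MvPowerSeries.coeff_X, if_pos rfl, mul_one]
    congr 1
    rw [Fin.prod_univ_two]
    fin_cases i
    · simp
    · simp
  · intro e _ he
    rw [MvPowerSeries.coeff_C_mul, MvPowerSeries.coeff_X, if_neg he, mul_zero, zero_mul]
  · intro hmem
    have hd0 : degreeOf d = 0 := by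
      by_contra hne
      apply hmem
      rw [mem_Iic_bound]
      constructor <;> · rw [Finsupp.single_apply]; split <;> omega
    have : d = 0 := degreeOf_eq_zero hd0
    subst this
    have hprod : (∏ k, G k ^ (Finsupp.single i 1) k) = G i := by
      rw [Fin.prod_univ_two]; fin_cases i <;> simp
    rw [MvPowerSeries.coeff_zero_eq_constantCoeff_apply, hprod, hG i, mul_zero]

lemma coeff_X0E (χ : PowerSeries ℂ) (e : Fin 2 →₀ ℕ) :
    MvPowerSeries.coeff e (MvPowerSeries.X 0 * substPM pXY χ)
      = if e 0 = e 1 + 1 then PowerSeries.coeff (e 1) χ else 0 := by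
  rw [show (MvPowerSeries.X 0 : MvPowerSeries (Fin 2) ℂ)
      = MvPowerSeries.monomial (Finsupp.single 0 1) 1 from rfl,
    MvPowerSeries.coeff_monomial_mul]
  by_cases hle : Finsupp.single (0 : Fin 2) 1 ≤ e
  · have he0 : 1 ≤ e 0 := Finsupp.single_le_iff.mp hle
    rw [if_pos hle, one_mul, coeff_E]
    have h0 : (e - Finsupp.single 0 1 : Fin 2 →₀ ℕ) 0 = e 0 - 1 := by
      rw [Finsupp.tsub_apply]; simp
    have h1 : (e - Finsupp.single 0 1 : Fin 2 →₀ ℕ) 1 = e 1 := by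
      rw [Finsupp.tsub_apply]; simp [Finsupp.single_apply]
    rw [h0, h1]
    by_cases hd : e 0 - 1 = e 1
    · rw [if_pos hd, if_pos (by omega), hd]
    · rw [if_neg hd, if_neg (by omega)]
  · rw [if_neg hle, if_neg (fun hc => hle (Finsupp.single_le_iff.mpr (by omega)))]

lemma coeff_X1E (χ : PowerSeries ℂ) (e : Fin 2 →₀ ℕ) :
    MvPowerSeries.coeff e (MvPowerSeries.X 1 * substPM pXY χ)
      = if e 1 = e 0 + 1 then PowerSeries.coeff (e 0) χ else 0 := by
  rw [show (MvPowerSeries.X 1 : MvPowerSeries (Fin 2) ℂ)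
      = MvPowerSeries.monomial (Finsupp.single 1 1) 1 from rfl,
    MvPowerSeries.coeff_monomial_mul]
  by_cases hle : Finsupp.single (1 : Fin 2) 1 ≤ e
  · have he1 : 1 ≤ e 1 := Finsupp.single_le_iff.mp hle
    rw [if_pos hle, one_mul, coeff_E]
    have h1 : (e - Finsupp.single 1 1 : Fin 2 →₀ ℕ) 1 = e 1 - 1 := by
      rw [Finsupp.tsub_apply]; simp
    have h0 : (e - Finsupp.single 1 1 : Fin 2 →₀ ℕ) 0 = e 0 := by
      rw [Finsupp.tsub_apply]; simp [Finsupp.single_apply]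
    rw [h0, h1]
    by_cases hd : e 0 = e 1 - 1
    · rw [if_pos hd, if_pos (by omega)]
    · rw [if_neg hd, if_neg (by omega)]
  · rw [if_neg hle, if_neg (fun hc => hle (Finsupp.single_le_iff.mpr (by omega)))]

lemma substM_prod_eq (G : FormalMap 2) (f : MvPowerSeries (Fin 2) ℂ) (d : Fin 2 →₀ ℕ) :
    MvPowerSeries.coeff d (substM G f)
      = ∑ e ∈ Finset.Iic (Finsupp.equivFunOnFinite.symm fun _ => degreeOf d),
          MvPowerSeries.coeff e f
            * MvPowerSeries.coeff d (G 0 ^ e 0 * G 1 ^ e 1) := by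
  have : MvPowerSeries.coeff d (substM G f)
      = ∑ e ∈ Finset.Iic (Finsupp.equivFunOnFinite.symm fun _ => degreeOf d),
          MvPowerSeries.coeff e f * MvPowerSeries.coeff d (∏ i, G i ^ e i) := rfl
  rw [this]
  refine Finset.sum_congr rfl fun e _ => ?_
  rw [Fin.prod_univ_two]

lemma substM_X0E {G : FormalMap 2}
    (hG : ∀ i, MvPowerSeries.constantCoeff (G i) = 0) (χ : PowerSeries ℂ) :
    substM G (MvPowerSeries.X 0 * substPM pXY χ)
      = G 0 * substPM (G 0 * G 1) χ := by
  have hG01 : MvPowerSeries.constantCoeff (G 0 * G 1) = 0 := by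
    rw [map_mul, hG 0, zero_mul]
  ext d
  -- LHS
  have hL1 : MvPowerSeries.coeff d (substM G (MvPowerSeries.X 0 * substPM pXY χ))
      = ∑ e ∈ (Finset.Iic (Finsupp.equivFunOnFinite.symm fun _ => degreeOf d : Fin 2 →₀ ℕ)).filter
            (fun e => e 0 = e 1 + 1),
          PowerSeries.coeff (e 1) χ * MvPowerSeries.coeff d (G 0 ^ e 0 * G 1 ^ e 1) := by
    rw [substM_prod_eq]
    have hstep : ∀ e ∈ Finset.Iic (Finsupp.equivFunOnFinite.symm fun _ => degreeOf d),
        MvPowerSeries.coeff e (MvPowerSeries.X 0 * substPM pXY χ)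
          * MvPowerSeries.coeff d (G 0 ^ e 0 * G 1 ^ e 1)
        = if e 0 = e 1 + 1 then
            PowerSeries.coeff (e 1) χ * MvPowerSeries.coeff d (G 0 ^ e 0 * G 1 ^ e 1)
          else 0 := by
      intro e _
      rw [coeff_X0E, ite_mul, zero_mul]
    rw [Finset.sum_congr rfl hstep]
    exact (Finset.sum_filter _ _).symm
  have hL2 : MvPowerSeries.coeff d (substM G (MvPowerSeries.X 0 * substPM pXY χ))
      = ∑ j ∈ Finset.range (degreeOf d),
          PowerSeries.coeff j χ * MvPowerSeries.coeff d (G 0 ^ (j+1) * G 1 ^ j) := by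
    rw [hL1]
    refine Finset.sum_nbij' (i := fun e => e 1)
      (j := fun j => Finsupp.single (0 : Fin 2) (j+1) + Finsupp.single 1 j) ?_ ?_ ?_ ?_ ?_
    · intro e he
      simp only [Finset.mem_filter, mem_Iic_bound] at he
      simp only [Finset.mem_range]
      omega
    · intro j hj
      rw [Finset.mem_range] at hj
      simp only [Finset.mem_filter, mem_Iic_bound, Finsupp.add_apply]
      simp [Finsupp.single_apply]
      omega
    · intro e he
      simp only [Finset.mem_filter, mem_Iic_bound] at he
      ext i
      fin_cases i <;> simp [Finsupp.single_apply] <;> omega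
    · intro j hj
      simp [Finsupp.single_apply]
    · intro e he
      simp only [Finset.mem_filter, mem_Iic_bound] at he
      rw [he.2]
  -- RHS
  have hR : MvPowerSeries.coeff d (G 0 * substPM (G 0 * G 1) χ)
      = ∑ j ∈ Finset.range (degreeOf d + 1),
          PowerSeries.coeff j χ * MvPowerSeries.coeff d (G 0 ^ (j+1) * G 1 ^ j) := by
    rw [MvPowerSeries.coeff_mul]
    have hinner : ∀ P ∈ Finset.HasAntidiagonal.antidiagonal d,
        MvPowerSeries.coeff P.1 (G 0) * MvPowerSeries.coeff P.2 (substPM (G 0 * G 1) χ)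
        = ∑ j ∈ Finset.range (degreeOf d + 1), PowerSeries.coeff j χ *
            (MvPowerSeries.coeff P.1 (G 0) * MvPowerSeries.coeff P.2 ((G 0 * G 1) ^ j)) := by
      intro P hP
      rw [Finset.HasAntidiagonal.mem_antidiagonal] at hP
      have hdeg : degreeOf P.2 ≤ degreeOf d := by
        rw [← hP, degreeOf_add]; omega
      have hthis : MvPowerSeries.coeff P.2 (substPM (G 0 * G 1) χ)
          = ∑ j ∈ Finset.range (degreeOf P.2 + 1),
              PowerSeries.coeff j χ * MvPowerSeries.coeff P.2 ((G 0 * G 1) ^ j) := rfl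
      have hpad : ∑ j ∈ Finset.range (degreeOf P.2 + 1),
            PowerSeries.coeff j χ * MvPowerSeries.coeff P.2 ((G 0 * G 1) ^ j)
          = ∑ j ∈ Finset.range (degreeOf d + 1),
            PowerSeries.coeff j χ * MvPowerSeries.coeff P.2 ((G 0 * G 1) ^ j) := by
        refine Finset.sum_subset (Finset.range_subset_range.mpr (by omega)) ?_
        intro j _ hj'
        rw [Finset.mem_range, not_lt] at hj'
        rw [ord_pow hG01 j (by omega), mul_zero]
      rw [hthis, hpad, Finset.mul_sum]
      exact Finset.sum_congr rfl fun j _ => by ring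
    rw [Finset.sum_congr rfl hinner, Finset.sum_comm]
    refine Finset.sum_congr rfl fun j _ => ?_
    rw [← Finset.mul_sum, ← MvPowerSeries.coeff_mul]
    congr 2
    rw [mul_pow, pow_succ]
    ring
  rw [hL2, hR, Finset.sum_range_succ, ord_mul (p := degreeOf d + 1) (q := degreeOf d)
    (fun e he => ord_pow (hG 0) (degreeOf d + 1) he) (fun e he => ord_pow (hG 1) (degreeOf d) he)
    (by omega), mul_zero, add_zero]

lemma substM_X1E {G : FormalMap 2}
    (hG : ∀ i, MvPowerSeries.constantCoeff (G i) = 0) (χ : PowerSeries ℂ) :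
    substM G (MvPowerSeries.X 1 * substPM pXY χ)
      = G 1 * substPM (G 0 * G 1) χ := by
  have hG01 : MvPowerSeries.constantCoeff (G 0 * G 1) = 0 := by
    rw [map_mul, hG 0, zero_mul]
  ext d
  -- LHS
  have hL1 : MvPowerSeries.coeff d (substM G (MvPowerSeries.X 1 * substPM pXY χ))
      = ∑ e ∈ (Finset.Iic (Finsupp.equivFunOnFinite.symm fun _ => degreeOf d : Fin 2 →₀ ℕ)).filter
            (fun e => e 1 = e 0 + 1),
          PowerSeries.coeff (e 0) χ * MvPowerSeries.coeff d (G 0 ^ e 0 * G 1 ^ e 1) := by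
    rw [substM_prod_eq]
    have hstep : ∀ e ∈ Finset.Iic (Finsupp.equivFunOnFinite.symm fun _ => degreeOf d),
        MvPowerSeries.coeff e (MvPowerSeries.X 1 * substPM pXY χ)
          * MvPowerSeries.coeff d (G 0 ^ e 0 * G 1 ^ e 1)
        = if e 1 = e 0 + 1 then
            PowerSeries.coeff (e 0) χ * MvPowerSeries.coeff d (G 0 ^ e 0 * G 1 ^ e 1)
          else 0 := by
      intro e _
      rw [coeff_X1E, ite_mul, zero_mul]
    rw [Finset.sum_congr rfl hstep]
    exact (Finset.sum_filter _ _).symm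
  have hL2 : MvPowerSeries.coeff d (substM G (MvPowerSeries.X 1 * substPM pXY χ))
      = ∑ j ∈ Finset.range (degreeOf d),
          PowerSeries.coeff j χ * MvPowerSeries.coeff d (G 0 ^ j * G 1 ^ (j+1)) := by
    rw [hL1]
    refine Finset.sum_nbij' (i := fun e => e 0)
      (j := fun j => Finsupp.single (0 : Fin 2) j + Finsupp.single 1 (j+1)) ?_ ?_ ?_ ?_ ?_
    · intro e he
      simp only [Finset.mem_filter, mem_Iic_bound] at he
      simp only [Finset.mem_range]
      omega
    · intro j hj
      rw [Finset.mem_range] at hj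
      simp only [Finset.mem_filter, mem_Iic_bound, Finsupp.add_apply]
      simp [Finsupp.single_apply]
      omega
    · intro e he
      simp only [Finset.mem_filter, mem_Iic_bound] at he
      ext i
      fin_cases i <;> simp [Finsupp.single_apply] <;> omega
    · intro j hj
      simp [Finsupp.single_apply]
    · intro e he
      simp only [Finset.mem_filter, mem_Iic_bound] at he
      rw [he.2]
  -- RHS
  have hR : MvPowerSeries.coeff d (G 1 * substPM (G 0 * G 1) χ)
      = ∑ j ∈ Finset.range (degreeOf d + 1),
          PowerSeries.coeff j χ * MvPowerSeries.coeff d (G 0 ^ j * G 1 ^ (j+1)) := by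
    rw [MvPowerSeries.coeff_mul]
    have hinner : ∀ P ∈ Finset.HasAntidiagonal.antidiagonal d,
        MvPowerSeries.coeff P.1 (G 1) * MvPowerSeries.coeff P.2 (substPM (G 0 * G 1) χ)
        = ∑ j ∈ Finset.range (degreeOf d + 1), PowerSeries.coeff j χ *
            (MvPowerSeries.coeff P.1 (G 1) * MvPowerSeries.coeff P.2 ((G 0 * G 1) ^ j)) := by
      intro P hP
      rw [Finset.HasAntidiagonal.mem_antidiagonal] at hP
      have hdeg : degreeOf P.2 ≤ degreeOf d := by
        rw [← hP, degreeOf_add]; omega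
      have hthis : MvPowerSeries.coeff P.2 (substPM (G 0 * G 1) χ)
          = ∑ j ∈ Finset.range (degreeOf P.2 + 1),
              PowerSeries.coeff j χ * MvPowerSeries.coeff P.2 ((G 0 * G 1) ^ j) := rfl
      have hpad : ∑ j ∈ Finset.range (degreeOf P.2 + 1),
            PowerSeries.coeff j χ * MvPowerSeries.coeff P.2 ((G 0 * G 1) ^ j)
          = ∑ j ∈ Finset.range (degreeOf d + 1),
            PowerSeries.coeff j χ * MvPowerSeries.coeff P.2 ((G 0 * G 1) ^ j) := by
        refine Finset.sum_subset (Finset.range_subset_range.mpr (by omega)) ?_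
        intro j _ hj'
        rw [Finset.mem_range, not_lt] at hj'
        rw [ord_pow hG01 j (by omega), mul_zero]
      rw [hthis, hpad, Finset.mul_sum]
      exact Finset.sum_congr rfl fun j _ => by ring
    rw [Finset.sum_congr rfl hinner, Finset.sum_comm]
    refine Finset.sum_congr rfl fun j _ => ?_
    rw [← Finset.mul_sum, ← MvPowerSeries.coeff_mul]
    congr 2
    rw [mul_pow, pow_succ]
    ring
  rw [hL2, hR, Finset.sum_range_succ, ord_mul (p := degreeOf d) (q := degreeOf d + 1)
    (fun e he => ord_pow (hG 0) (degreeOf d) he) (fun e he => ord_pow (hG 1) (degreeOf d + 1) he)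
    (by omega), mul_zero, add_zero]

end MV
end My

open PowerSeries in
/-- Let ρ = X·u (tangent to the identity) be reversed by the rotation t ↦ ωt with
ω = c⁻², i.e. ρ(ωρ(t)) = ωt, and let ρ^{1/2} = X·v be its formal square root iterate
(ρ^{1/2} ∘ ρ^{1/2} = ρ).  Then F = (z₁ρ(p)/ρ^{1/2}(p), z₂ρ^{1/2}(p)/p), p = z₁z₂, is
reversed by J_c(z₁,z₂) = (cz₂, cz₁): equivalently F ∘ J_c ∘ F = J_c. -/
theorem Jc_reverses_normal_form (c : ℂ) (hc : c ≠ 0) (u v : PowerSeries ℂ)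
    (hu0 : PowerSeries.constantCoeff u = 1)
    (hv0 : PowerSeries.constantCoeff v = 1)
    (hrev : compP (PowerSeries.X * u)
        (PowerSeries.C (c * c)⁻¹ * (PowerSeries.X * u)) =
      PowerSeries.C (c * c)⁻¹ * PowerSeries.X)
    (hhalf : compP (PowerSeries.X * v) (PowerSeries.X * v) = PowerSeries.X * u) :
    compM ![MvPowerSeries.X 0 * substPM pXY (u * v⁻¹), MvPowerSeries.X 1 * substPM pXY v]
        (compM ![MvPowerSeries.C c * MvPowerSeries.X 1,
                 MvPowerSeries.C c * MvPowerSeries.X 0]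
          ![MvPowerSeries.X 0 * substPM pXY (u * v⁻¹), MvPowerSeries.X 1 * substPM pXY v]) =
      ![MvPowerSeries.C c * MvPowerSeries.X 1,
        MvPowerSeries.C c * MvPowerSeries.X 0] := by
  have hvne : PowerSeries.constantCoeff v ≠ 0 := by rw [hv0]; exact one_ne_zero
  have hvφ : v * (u * v⁻¹) = u := by
    calc v * (u * v⁻¹) = u * (v * v⁻¹) := by ring
    _ = u := by rw [PowerSeries.mul_inv_cancel v hvne, mul_one]
  obtain ⟨main1, main2⟩ := My.one_var_main hc hu0 hv0 hrev hhalf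
  set φ : PowerSeries ℂ := u * v⁻¹ with hφdef
  set w : PowerSeries ℂ := PowerSeries.C (c * c) * (PowerSeries.X * u) with hwdef
  have hw0 : PowerSeries.constantCoeff w = 0 := by
    rw [hwdef]; simp
  set F : FormalMap 2 :=
    ![MvPowerSeries.X 0 * substPM pXY φ, MvPowerSeries.X 1 * substPM pXY v] with hFdef
  set J : FormalMap 2 :=
    ![MvPowerSeries.C c * MvPowerSeries.X 1,
      MvPowerSeries.C c * MvPowerSeries.X 0] with hJdef
  have hF0 : F 0 = MvPowerSeries.X 0 * substPM pXY φ := by rw [hFdef]; simp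
  have hF1 : F 1 = MvPowerSeries.X 1 * substPM pXY v := by rw [hFdef]; simp
  have hJ0 : J 0 = MvPowerSeries.C c * MvPowerSeries.X 1 := by rw [hJdef]; simp
  have hJ1 : J 1 = MvPowerSeries.C c * MvPowerSeries.X 0 := by rw [hJdef]; simp
  have hFc : ∀ i, MvPowerSeries.constantCoeff (F i) = 0 := by
    rw [Fin.forall_fin_two]
    constructor
    · rw [hF0, map_mul, MvPowerSeries.constantCoeff_X, zero_mul]
    · rw [hF1, map_mul, MvPowerSeries.constantCoeff_X, zero_mul]
  set G : FormalMap 2 := compM J F with hGdef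
  have hG0 : G 0 = MvPowerSeries.C c * (MvPowerSeries.X 1 * substPM pXY v) := by
    rw [hGdef]
    show substM F (J 0) = _
    rw [hJ0, My.substM_CX hFc c 1, hF1]
  have hG1 : G 1 = MvPowerSeries.C c * (MvPowerSeries.X 0 * substPM pXY φ) := by
    rw [hGdef]
    show substM F (J 1) = _
    rw [hJ1, My.substM_CX hFc c 0, hF0]
  have hGc : ∀ i, MvPowerSeries.constantCoeff (G i) = 0 := by
    rw [Fin.forall_fin_two]
    constructor
    · rw [hG0, map_mul, map_mul, MvPowerSeries.constantCoeff_X, zero_mul, mul_zero]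
    · rw [hG1, map_mul, map_mul, MvPowerSeries.constantCoeff_X, zero_mul, mul_zero]
  -- the product G0 * G1 is E w
  have hq : G 0 * G 1 = substPM pXY w := by
    calc G 0 * G 1
        = (MvPowerSeries.C c * MvPowerSeries.C c) *
            ((MvPowerSeries.X 0 * MvPowerSeries.X 1) * (substPM pXY v * substPM pXY φ)) := by
          rw [hG0, hG1]; ring
    _ = MvPowerSeries.C (c * c) * (pXY * substPM pXY (v * φ)) := by
          rw [← map_mul, ← My.E_mul, pXY]
    _ = MvPowerSeries.C (c * c) * (substPM pXY PowerSeries.X * substPM pXY u) := by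
          rw [My.E_X, hvφ]
    _ = substPM pXY w := by
          rw [← My.E_mul, ← My.E_Cmul, hwdef]
  -- components
  funext i
  match i with
  | 0 =>
    show substM G (F 0) = J 0
    rw [hF0, My.substM_X0E hGc, hq, My.substPM_E hw0, hG0, hJ0]
    calc MvPowerSeries.C c * (MvPowerSeries.X 1 * substPM pXY v)
          * substPM pXY (compP φ w)
        = MvPowerSeries.C c * MvPowerSeries.X 1
            * (substPM pXY v * substPM pXY (compP φ w)) := by ring
    _ = MvPowerSeries.C c * MvPowerSeries.X 1
            * substPM pXY (v * compP φ w) := by rw [← My.E_mul]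
    _ = MvPowerSeries.C c * MvPowerSeries.X 1 := by
          rw [main1, My.E_one, mul_one]
  | 1 =>
    show substM G (F 1) = J 1
    rw [hF1, My.substM_X1E hGc, hq, My.substPM_E hw0, hG1, hJ1]
    calc MvPowerSeries.C c * (MvPowerSeries.X 0 * substPM pXY φ)
          * substPM pXY (compP v w)
        = MvPowerSeries.C c * MvPowerSeries.X 0
            * (substPM pXY φ * substPM pXY (compP v w)) := by ring
    _ = MvPowerSeries.C c * MvPowerSeries.X 0
            * substPM pXY (φ * compP v w) := by rw [← My.E_mul]
    _ = MvPowerSeries.C c * MvPowerSeries.X 0 := by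
          rw [main2, My.E_one, mul_one]

end
end
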